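/- Suppose the tuple {(n0,n1,n2), B, B_I} is admissible. Then for every x ∈ X, the full derivative vector x_D is recovered from the fundamental state Dx by x_D(s) = U1 (Dx)(s) + ∫_a^s R_{D,1}(s,θ) (Dx)(θ) dθ + ∫_s^b R_{D,2}(s,θ) (Dx)(θ) dθ for almost every s ∈ [a,b], where R_{D,2}(s,θ) := U2 T(s−a) B_Q(θ) and R_{D,1}(s,θ) := R_{D,2}(s,θ) + U2 Q(s−θ). -/

import Mathlib

open MeasureTheory Matrix Topology Filter

noncomputable section

namespace PIEpaper

/-- The Lebesgue measure restricted to the interval `[a,b]`. -/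
def μab (a b : ℝ) : Measure ℝ := volume.restrict (Set.Icc a b)

/-- A matrix-valued function on `[a,b]` is essentially bounded (belongs to `L∞`). -/
def EssBddMat {ι κ : Type*} (a b : ℝ) (M : ℝ → Matrix ι κ ℝ) : Prop :=
  Measurable (fun s i j => M s i j) ∧ ∃ C : ℝ, ∀ᵐ s ∂(μab a b), ∀ i j, |M s i j| ≤ C

/-- A matrix-valued function on `[a,b]` is (entrywise) square integrable. -/
def SqIntMat {ι κ : Type*} (a b : ℝ) (M : ℝ → Matrix ι κ ℝ) : Prop :=
  Measurable (fun s i j => M s i j) ∧ ∀ i j, MemLp (fun s => M s i j) 2 (μab a b)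

/-- A matrix-valued kernel `R : [a,b]² → ℝ^{ι×κ}` is separable if `R(s,θ) = F(s)ᵀ G(θ)`
for essentially bounded `F, G`. -/
def SepMat {ι κ : Type*} (a b : ℝ) (R : ℝ → ℝ → Matrix ι κ ℝ) : Prop :=
  ∃ (r : ℕ) (F : ℝ → Matrix (Fin r) ι ℝ) (G : ℝ → Matrix (Fin r) κ ℝ),
    EssBddMat a b F ∧ EssBddMat a b G ∧
    ∀ s ∈ Set.Icc a b, ∀ θ ∈ Set.Icc a b, R s θ = (F s)ᵀ * G θ

variable (a b : ℝ) (n0 n1 n2 : ℕ)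

/-- Index type for the PDE state blocks `(x0, x1, x2)`, and likewise for the
fundamental state `Dx = (x0, ∂ₛx1, ∂ₛ²x2)`; it has `n_x = n0+n1+n2` elements. -/
abbrev Ix := Fin n0 ⊕ (Fin n1 ⊕ Fin n2)

/-- Index type for the boundary core `x_c = (x1, x2, ∂ₛx2)`; it has `n_S = n1+2n2` elements. -/
abbrev Ic := Fin n1 ⊕ (Fin n2 ⊕ Fin n2)

/-- Index type for the first two block rows `(n1- and n2-sized)`. -/
abbrev I12 := Fin n1 ⊕ Fin n2

/-- Index type for the full derivative vector
`x_D = (x0, x1, x2, ∂ₛx1, ∂ₛx2, ∂ₛ²x2)` (with `n_x + n_S` elements), organized into the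
fundamental-state block `(x0, ∂ₛx1, ∂ₛ²x2)` (left) and the core block `(x1, x2, ∂ₛx2)` (right). -/
abbrev ID := Ix n0 n1 n2 ⊕ Ic n1 n2

/-- An element of `W^n = W_0^{n0} × W_1^{n1} × W_2^{n2}` on `[a,b]`, encoded through its
components together with their (weak) derivatives: `x1 ∈ W_1` and `x2 ∈ W_2` are identified
with their absolutely continuous representatives, i.e. they satisfy the fundamental theorem
of calculus with square-integrable derivatives `dx1 = ∂ₛx1`, `dx2 = ∂ₛx2`, `ddx2 = ∂ₛ²x2`. -/
structure State where
  x0 : ℝ → Fin n0 → ℝ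
  x1 : ℝ → Fin n1 → ℝ
  dx1 : ℝ → Fin n1 → ℝ
  x2 : ℝ → Fin n2 → ℝ
  dx2 : ℝ → Fin n2 → ℝ
  ddx2 : ℝ → Fin n2 → ℝ
  memLp_x0 : MemLp x0 2 (μab a b)
  memLp_dx1 : MemLp dx1 2 (μab a b)
  memLp_dx2 : MemLp dx2 2 (μab a b)
  memLp_ddx2 : MemLp ddx2 2 (μab a b)
  ftc_x1 : ∀ s ∈ Set.Icc a b, ∀ i, x1 s i = x1 a i + ∫ θ in a..s, dx1 θ i
  ftc_x2 : ∀ s ∈ Set.Icc a b, ∀ i, x2 s i = x2 a i + ∫ θ in a..s, dx2 θ i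
  ftc_dx2 : ∀ s ∈ Set.Icc a b, ∀ i, dx2 s i = dx2 a i + ∫ θ in a..s, ddx2 θ i

variable {a b n0 n1 n2}

/-- The PDE state `x = (x0, x1, x2)` as an `ℝ^{n_x}`-valued function. -/
def xfun (x : State a b n0 n1 n2) (s : ℝ) : Ix n0 n1 n2 → ℝ :=
  Sum.elim (x.x0 s) (Sum.elim (x.x1 s) (x.x2 s))

/-- The fundamental state `Dx = (x0, ∂ₛx1, ∂ₛ²x2)` as an `ℝ^{n_x}`-valued function. -/
def Dx (x : State a b n0 n1 n2) (s : ℝ) : Ix n0 n1 n2 → ℝ :=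
  Sum.elim (x.x0 s) (Sum.elim (x.dx1 s) (x.ddx2 s))

/-- The boundary core `x_c = (x1, x2, ∂ₛx2)` as an `ℝ^{n_S}`-valued function. -/
def xc (x : State a b n0 n1 n2) (s : ℝ) : Ic n1 n2 → ℝ :=
  Sum.elim (x.x1 s) (Sum.elim (x.x2 s) (x.dx2 s))

/-- The full derivative vector `x_D = (x0, x1, x2, ∂ₛx1, ∂ₛx2, ∂ₛ²x2)`. -/
def xD (x : State a b n0 n1 n2) (s : ℝ) : ID n0 n1 n2 → ℝ :=
  Sum.elim (Dx x s) (xc x s)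

/-- The boundary-value vector `x_b = (x_c(a), x_c(b)) ∈ ℝ^{2 n_S}`. -/
def xb (x : State a b n0 n1 n2) : (Ic n1 n2 ⊕ Ic n1 n2) → ℝ :=
  Sum.elim (xc x a) (xc x b)

variable (a b n0 n1 n2)

/-- `T(η) = [[I,0,0],[0,I,ηI],[0,0,I]] ∈ ℝ^{n_S × n_S}`. -/
def Tmat (η : ℝ) : Matrix (Ic n1 n2) (Ic n1 n2) ℝ :=
  Matrix.of fun i j =>
    match i, j with
    | .inl i, .inl j => if i = j then (1:ℝ) else 0
    | .inr (.inl i), .inr (.inl j) => if i = j then (1:ℝ) else 0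
    | .inr (.inl i), .inr (.inr j) => if i = j then η else 0
    | .inr (.inr i), .inr (.inr j) => if i = j then (1:ℝ) else 0
    | _, _ => 0

/-- `Q(η) = [[0,I_{n1},0],[0,0,ηI_{n2}],[0,0,I_{n2}]] ∈ ℝ^{n_S × n_x}`. -/
def Qmat (η : ℝ) : Matrix (Ic n1 n2) (Ix n0 n1 n2) ℝ :=
  Matrix.of fun i j =>
    match i, j with
    | .inl i, .inr (.inl j) => if i = j then (1:ℝ) else 0
    | .inr (.inl i), .inr (.inr j) => if i = j then η else 0
    | .inr (.inr i), .inr (.inr j) => if i = j then (1:ℝ) else 0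
    | _, _ => 0

/-- Embedding of the first two block rows into the `x_c` index. -/
def emb12 : I12 n1 n2 → Ic n1 n2 := Sum.elim Sum.inl (fun k => Sum.inr (Sum.inl k))

/-- `T1(η)`: the first two block rows of `T(η)`. -/
def T1mat (η : ℝ) : Matrix (I12 n1 n2) (Ic n1 n2) ℝ :=
  Matrix.of fun i j => Tmat n1 n2 η (emb12 n1 n2 i) j

/-- `Q1(η)`: the first two block rows of `Q(η)`. -/
def Q1mat (η : ℝ) : Matrix (I12 n1 n2) (Ix n0 n1 n2) ℝ :=
  Matrix.of fun i j => Qmat n0 n1 n2 η (emb12 n1 n2 i) j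

/-- `U1 ∈ ℝ^{(n_x+n_S) × n_x}`: the 0-1 matrix placing `(v0,v1,v2)` into the
`x0`, `∂ₛx1` and `∂ₛ²x2` blocks of the `x_D` ordering. -/
def U1 : Matrix (ID n0 n1 n2) (Ix n0 n1 n2) ℝ :=
  Matrix.of fun i j =>
    match i with
    | .inl i' => if i' = j then (1:ℝ) else 0
    | .inr _ => 0

/-- `U2 ∈ ℝ^{(n_x+n_S) × n_S}`: the 0-1 matrix placing `(w1,w2,w3)` into the
`x1`, `x2` and `∂ₛx2` blocks of the `x_D` ordering. -/
def U2 : Matrix (ID n0 n1 n2) (Ic n1 n2) ℝ :=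
  Matrix.of fun i j =>
    match i with
    | .inl _ => (0:ℝ)
    | .inr i' => if i' = j then 1 else 0

/-- The stacked matrix `[T(0); T(b-a)] ∈ ℝ^{2n_S × n_S}`. -/
def Tstack : Matrix (Ic n1 n2 ⊕ Ic n1 n2) (Ic n1 n2) ℝ :=
  Matrix.of fun i j =>
    match i with
    | .inl i' => Tmat n1 n2 0 i' j
    | .inr i' => Tmat n1 n2 (b - a) i' j

/-- The stacked matrix `[0_{n_S×n_x}; Q(η)] ∈ ℝ^{2n_S × n_x}`. -/
def Qstack (η : ℝ) : Matrix (Ic n1 n2 ⊕ Ic n1 n2) (Ix n0 n1 n2) ℝ :=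
  Matrix.of fun i j =>
    match i with
    | .inl _ => (0:ℝ)
    | .inr i' => Qmat n0 n1 n2 η i' j

variable (B : Matrix (Ic n1 n2) (Ic n1 n2 ⊕ Ic n1 n2) ℝ)
variable (B_I : ℝ → Matrix (Ic n1 n2) (ID n0 n1 n2) ℝ)

/-- `B_T = B [T(0); T(b−a)] − ∫_a^b B_I(s) U2 T(s−a) ds`. -/
def BT : Matrix (Ic n1 n2) (Ic n1 n2) ℝ :=
  B * Tstack a b n1 n2 -
    Matrix.of fun i j => ∫ s in a..b, (B_I s * U2 n0 n1 n2 * Tmat n1 n2 (s - a)) i j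

/-- Admissibility of the boundary conditions: `B_T` is invertible. -/
def Admissible : Prop := IsUnit (BT a b n0 n1 n2 B B_I).det

/-- `B_Q(s) = B_T⁻¹ ( B_I(s) U1 − B [0; Q(b−s)] + ∫_s^b B_I(θ) U2 Q(θ−s) dθ )`. -/
def BQ (s : ℝ) : Matrix (Ic n1 n2) (Ix n0 n1 n2) ℝ :=
  (BT a b n0 n1 n2 B B_I)⁻¹ *
    (B_I s * U1 n0 n1 n2 - B * Qstack n0 n1 n2 (b - s) +
      Matrix.of fun i j => ∫ θ in s..b, (B_I θ * U2 n0 n1 n2 * Qmat n0 n1 n2 (θ - s)) i j)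

/-- The boundary condition `B x_b = ∫_a^b B_I(s) x_D(s) ds` defining the set `X`;
  together with the regularity encoded in `State` this says `x ∈ X`. -/
def BCholds (x : State a b n0 n1 n2) : Prop :=
  ∀ i, B.mulVec (xb x) i = ∫ s in a..b, (B_I s).mulVec (xD x s) i

/-- `G0 = diag(I_{n0}, 0_{n1+n2})`. -/
def G0 : Matrix (Ix n0 n1 n2) (Ix n0 n1 n2) ℝ :=
  Matrix.of fun i j =>
    match i, j with
    | .inl i', .inl j' => if i' = j' then (1:ℝ) else 0
    | _, _ => 0

/-- `G2(s,θ) = [0_{n0×n_x}; T1(s−a) B_Q(θ)]`. -/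
def G2 (s θ : ℝ) : Matrix (Ix n0 n1 n2) (Ix n0 n1 n2) ℝ :=
  Matrix.of fun i j =>
    match i with
    | .inl _ => (0:ℝ)
    | .inr i' => (T1mat n1 n2 (s - a) * BQ a b n0 n1 n2 B B_I θ) i' j

/-- `G1(s,θ) = [0_{n0×n_x}; Q1(s−θ)] + G2(s,θ)`. -/
def G1 (s θ : ℝ) : Matrix (Ix n0 n1 n2) (Ix n0 n1 n2) ℝ :=
  (Matrix.of fun i j =>
    match i with
    | .inl _ => (0:ℝ)
    | .inr i' => Q1mat n0 n1 n2 (s - θ) i' j) + G2 a b n0 n1 n2 B B_I s θ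

/-- The PI operator `𝒯`, acting on (representatives of) functions in `L2^{n_x}`:
`(𝒯v)(s) = G0 v(s) + ∫_a^s G1(s,θ) v(θ) dθ + ∫_s^b G2(s,θ) v(θ) dθ`. -/
def Tfun (v : ℝ → Ix n0 n1 n2 → ℝ) (s : ℝ) : Ix n0 n1 n2 → ℝ := fun i =>
  (G0 n0 n1 n2).mulVec (v s) i
  + (∫ θ in a..s, (G1 a b n0 n1 n2 B B_I s θ).mulVec (v θ) i)
  + (∫ θ in s..b, (G2 a b n0 n1 n2 B B_I s θ).mulVec (v θ) i)

/-- `R_{D,2}(s,θ) = U2 T(s−a) B_Q(θ)`. -/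
def RD2 (s θ : ℝ) : Matrix (ID n0 n1 n2) (Ix n0 n1 n2) ℝ :=
  U2 n0 n1 n2 * Tmat n1 n2 (s - a) * BQ a b n0 n1 n2 B B_I θ

/-- `R_{D,1}(s,θ) = R_{D,2}(s,θ) + U2 Q(s−θ)`. -/
def RD1 (s θ : ℝ) : Matrix (ID n0 n1 n2) (Ix n0 n1 n2) ℝ :=
  RD2 a b n0 n1 n2 B B_I s θ + U2 n0 n1 n2 * Qmat n0 n1 n2 (s - θ)

end PIEpaper

namespace PIEpaper
variable (a b : ℝ) (n0 n1 n2 : ℕ)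
variable (B : Matrix (Ic n1 n2) (Ic n1 n2 ⊕ Ic n1 n2) ℝ)
variable (B_I : ℝ → Matrix (Ic n1 n2) (ID n0 n1 n2) ℝ)

/-- The `L2[a,b]` norm of an `ℝ^ι`-valued function. -/
def L2norm {ι : Type*} [Fintype ι] (f : ℝ → ι → ℝ) : ℝ :=
  Real.sqrt (∫ s in a..b, ∑ i, (f s i) ^ 2)

/-- The `L2[a,b]` inner product of two `ℝ^ι`-valued functions. -/
def L2inner {ι : Type*} [Fintype ι] (f g : ℝ → ι → ℝ) : ℝ :=
  ∫ s in a..b, ∑ i, f s i * g s i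

variable (A0 : ℝ → Matrix (Ix n0 n1 n2) (ID n0 n1 n2) ℝ)
variable (A1 A2 : ℝ → ℝ → Matrix (Ix n0 n1 n2) (ID n0 n1 n2) ℝ)

/-- `Â0(s) = A0(s) U1`. -/
def Ahat0 (s : ℝ) : Matrix (Ix n0 n1 n2) (Ix n0 n1 n2) ℝ := A0 s * U1 n0 n1 n2

/-- `Â1(s,θ)`. -/
def Ahat1 (s θ : ℝ) : Matrix (Ix n0 n1 n2) (Ix n0 n1 n2) ℝ :=
  A0 s * RD1 a b n0 n1 n2 B B_I s θ + A1 s θ * U1 n0 n1 n2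
  + (Matrix.of fun i j => ∫ β in a..θ, (A1 s β * RD2 a b n0 n1 n2 B B_I β θ) i j)
  + (Matrix.of fun i j => ∫ β in θ..s, (A1 s β * RD1 a b n0 n1 n2 B B_I β θ) i j)
  + (Matrix.of fun i j => ∫ β in s..b, (A2 s β * RD1 a b n0 n1 n2 B B_I β θ) i j)

/-- `Â2(s,θ)`. -/
def Ahat2 (s θ : ℝ) : Matrix (Ix n0 n1 n2) (Ix n0 n1 n2) ℝ :=
  A0 s * RD2 a b n0 n1 n2 B B_I s θ + A2 s θ * U1 n0 n1 n2
  + (Matrix.of fun i j => ∫ β in a..s, (A1 s β * RD2 a b n0 n1 n2 B B_I β θ) i j)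
  + (Matrix.of fun i j => ∫ β in s..θ, (A2 s β * RD2 a b n0 n1 n2 B B_I β θ) i j)
  + (Matrix.of fun i j => ∫ β in θ..b, (A2 s β * RD1 a b n0 n1 n2 B B_I β θ) i j)

/-- The PI operator `𝒜`:
`(𝒜v)(s) = Â0(s) v(s) + ∫_a^s Â1(s,θ) v(θ) dθ + ∫_s^b Â2(s,θ) v(θ) dθ`. -/
def Afun (v : ℝ → Ix n0 n1 n2 → ℝ) (s : ℝ) : Ix n0 n1 n2 → ℝ := fun i =>
  (Ahat0 n0 n1 n2 A0 s).mulVec (v s) i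
  + (∫ θ in a..s, (Ahat1 a b n0 n1 n2 B B_I A0 A1 A2 s θ).mulVec (v θ) i)
  + (∫ θ in s..b, (Ahat2 a b n0 n1 n2 B B_I A0 A1 A2 s θ).mulVec (v θ) i)

/-- The right-hand side of the PDE dynamics:
`A0(s) x_D(s) + ∫_a^s A1(s,θ) x_D(θ) dθ + ∫_s^b A2(s,θ) x_D(θ) dθ`. -/
def PDErhs (x : State a b n0 n1 n2) (s : ℝ) : Ix n0 n1 n2 → ℝ := fun i =>
  (A0 s).mulVec (xD x s) i
  + (∫ θ in a..s, (A1 s θ).mulVec (xD x θ) i)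
  + (∫ θ in s..b, (A2 s θ).mulVec (xD x θ) i)

/-- `t ↦ u(t)` is Fréchet differentiable at `t` with respect to the `L2[a,b]` norm,
with derivative `g`. -/
def HasL2DerivAt (u : ℝ → ℝ → Ix n0 n1 n2 → ℝ) (g : ℝ → Ix n0 n1 n2 → ℝ) (t : ℝ) : Prop :=
  Tendsto (fun h : ℝ =>
      L2norm a b (fun s i => (u (t + h) s i - u t s i) / h - g s i))
    (nhdsWithin 0 {0}ᶜ) (nhds 0)

/-- `t ↦ u(t)` is Fréchet differentiable at `t` with respect to the `𝒯`-norm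
`v ↦ ‖𝒯v‖_{L2}`, with derivative `g`. -/
def HasTDerivAt (u : ℝ → ℝ → Ix n0 n1 n2 → ℝ) (g : ℝ → Ix n0 n1 n2 → ℝ) (t : ℝ) : Prop :=
  Tendsto (fun h : ℝ =>
      L2norm a b (Tfun a b n0 n1 n2 B B_I
        (fun s i => (u (t + h) s i - u t s i) / h - g s i)))
    (nhdsWithin 0 {0}ᶜ) (nhds 0)

/-- `x : [0,∞) → W^n` satisfies the PDE defined by `{(n0,n1,n2), B, B_I, A0, A1, A2}` with
initial condition `x⁰ ∈ X`: `x(t) ∈ X` for all `t ≥ 0`, `x(0) = x⁰`, and for almost every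
`t ≥ 0`, `x` is Fréchet differentiable (w.r.t. the `L2` norm) at `t` with derivative `ẋ(t)`
satisfying the dynamics for almost every `s ∈ [a,b]`. -/
def SatisfiesPDE (x : ℝ → State a b n0 n1 n2) (x0 : State a b n0 n1 n2) : Prop :=
  (∀ t, 0 ≤ t → BCholds a b n0 n1 n2 B B_I (x t)) ∧
  (∀ᵐ s ∂(μab a b), ∀ i, xfun (x 0) s i = xfun x0 s i) ∧
  (∀ᵐ t ∂(volume.restrict (Set.Ici (0:ℝ))), ∃ g : ℝ → Ix n0 n1 n2 → ℝ,
    HasL2DerivAt a b n0 n1 n2 (fun τ => xfun (x τ)) g t ∧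
    ∀ᵐ s ∂(μab a b), ∀ i, g s i = PDErhs a b n0 n1 n2 A0 A1 A2 (x t) s i)

/-- `x_f : [0,∞) → L2^{n_x}` satisfies the PIE defined by `{𝒯, 𝒜}` with initial condition
`x_f⁰ ∈ L2^{n_x}`: `x_f(t) ∈ L2` for all `t ≥ 0`, `x_f(0) = x_f⁰`, and for almost every
`t ≥ 0`, `x_f` is Fréchet differentiable w.r.t. the `𝒯`-norm at `t` with derivative
`ẋ_f(t)` satisfying `𝒯 ẋ_f(t) = 𝒜 x_f(t)` for almost every `s ∈ [a,b]`. -/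
def SatisfiesPIE (xf : ℝ → ℝ → Ix n0 n1 n2 → ℝ) (xf0 : ℝ → Ix n0 n1 n2 → ℝ) : Prop :=
  (∀ t, 0 ≤ t → MemLp (xf t) 2 (μab a b)) ∧
  (∀ᵐ s ∂(μab a b), ∀ i, xf 0 s i = xf0 s i) ∧
  (∀ᵐ t ∂(volume.restrict (Set.Ici (0:ℝ))), ∃ g : ℝ → Ix n0 n1 n2 → ℝ,
    HasTDerivAt a b n0 n1 n2 B B_I xf g t ∧
    ∀ᵐ s ∂(μab a b), ∀ i,
      Tfun a b n0 n1 n2 B B_I g s i = Afun a b n0 n1 n2 B B_I A0 A1 A2 (xf t) s i)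

/-- The `X`-norm `‖x‖_X = (Σ_{i=0}^2 ‖∂ₛ^i x_i‖²_{L2})^{1/2}`. -/
def normX (x : State a b n0 n1 n2) : ℝ :=
  Real.sqrt ((L2norm a b x.x0) ^ 2 + (L2norm a b x.dx1) ^ 2 + (L2norm a b x.ddx2) ^ 2)

/-- The Sobolev-type norm `‖x‖_H = Σ_{i=0}^2 Σ_{j=0}^i ‖∂ₛ^j x_i‖_{L2}`. -/
def normH (x : State a b n0 n1 n2) : ℝ :=
  L2norm a b x.x0 + (L2norm a b x.x1 + L2norm a b x.dx1)
    + (L2norm a b x.x2 + L2norm a b x.dx2 + L2norm a b x.ddx2)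

/-- The PDE defined by `{(n0,n1,n2), B, B_I, A0, A1, A2}` is exponentially stable. -/
def ExpStablePDE : Prop :=
  ∃ M > (0:ℝ), ∃ α > (0:ℝ), ∀ x0 : State a b n0 n1 n2, BCholds a b n0 n1 n2 B B_I x0 →
    ∀ x : ℝ → State a b n0 n1 n2, SatisfiesPDE a b n0 n1 n2 B B_I A0 A1 A2 x x0 →
      ∀ t, 0 ≤ t → normH a b n0 n1 n2 (x t) ≤ M * normH a b n0 n1 n2 x0 * Real.exp (-α * t)

/-- The PIE defined by `{𝒯, 𝒜}` is exponentially stable. -/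
def ExpStablePIE : Prop :=
  ∃ M > (0:ℝ), ∃ α > (0:ℝ), ∀ xf0 : ℝ → Ix n0 n1 n2 → ℝ, MemLp xf0 2 (μab a b) →
    ∀ xf : ℝ → ℝ → Ix n0 n1 n2 → ℝ,
      SatisfiesPIE a b n0 n1 n2 B B_I A0 A1 A2 xf xf0 →
      ∀ t, 0 ≤ t → L2norm a b (xf t) ≤ M * L2norm a b xf0 * Real.exp (-α * t)

/-- The `X`-inner product `⟨u,w⟩_X = Σ_{i=0}^2 ⟨∂ₛ^i u_i, ∂ₛ^i w_i⟩_{L2}` of two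
`ℝ^{n_x}`-valued functions, where the spatial derivatives of the `W_1`- and `W_2`-blocks
are taken classically (they exist a.e. for elements of `X`). -/
def XinnerF (u w : ℝ → Ix n0 n1 n2 → ℝ) : ℝ :=
  (∫ s in a..b, ∑ i : Fin n0, u s (Sum.inl i) * w s (Sum.inl i))
  + (∫ s in a..b, ∑ i : Fin n1,
      deriv (fun t => u t (Sum.inr (Sum.inl i))) s *
      deriv (fun t => w t (Sum.inr (Sum.inl i))) s)
  + (∫ s in a..b, ∑ i : Fin n2,
      deriv (deriv (fun t => u t (Sum.inr (Sum.inr i)))) s *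
      deriv (deriv (fun t => w t (Sum.inr (Sum.inr i)))) s)

/-- The `X`-distance between two elements of `X`, induced by the `X`-norm:
`‖u − v‖_X = ‖Du − Dv‖_{L2}`. -/
def distX (u v : State a b n0 n1 n2) : ℝ :=
  Real.sqrt (∫ s in a..b, ∑ i, (Dx u s i - Dx v s i) ^ 2)

end PIEpaper

namespace PIEpaper


open Set intervalIntegral

instance μab_finite (a b : ℝ) : IsFiniteMeasure (μab a b) :=
  ⟨by rw [μab, Measure.restrict_apply_univ]; exact measure_Icc_lt_top⟩

section Aux
variable {a b : ℝ}

lemma L2mul {f g : ℝ → ℝ} (hf : MemLp f 2 (μab a b)) (hg : MemLp g 2 (μab a b)) :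
    Integrable (fun s => f s * g s) (μab a b) := by
  haveI : ENNReal.HolderTriple 2 2 1 := ⟨by simp [ENNReal.inv_two_add_inv_two]⟩
  have h : MemLp (fun s => f s * g s) 1 (μab a b) := hg.mul' hf
  rw [← memLp_one_iff_integrable]
  exact h

lemma contOn_memLp2 {c : ℝ → ℝ} (hc : ContinuousOn c (Icc a b)) : MemLp c 2 (μab a b) := by
  obtain ⟨C, hC⟩ := isCompact_Icc.exists_bound_of_continuousOn hc
  exact MemLp.of_bound (hc.aestronglyMeasurable measurableSet_Icc) C
    (((ae_restrict_mem measurableSet_Icc)).mono fun x hx => hC x hx)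

lemma memLp2_mul_contOn {f c : ℝ → ℝ} (hf : MemLp f 2 (μab a b))
    (hc : ContinuousOn c (Icc a b)) : MemLp (fun θ => c θ * f θ) 2 (μab a b) := by
  have hctop : MemLp c ⊤ (μab a b) := by
    obtain ⟨C, hC⟩ := isCompact_Icc.exists_bound_of_continuousOn hc
    exact memLp_top_of_bound (hc.aestronglyMeasurable measurableSet_Icc) C
      (((ae_restrict_mem measurableSet_Icc)).mono fun x hx => hC x hx)
  exact hf.mul' hctop

lemma intInt (hab : a ≤ b) {f : ℝ → ℝ} (hf : Integrable f (μab a b))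
    {c d : ℝ} (hc : c ∈ Icc a b) (hd : d ∈ Icc a b) : IntervalIntegrable f volume c d := by
  have h1 : IntervalIntegrable f volume a b := by
    rw [intervalIntegrable_iff_integrableOn_Ioc_of_le hab]
    have hf' : IntegrableOn f (Icc a b) volume := hf
    exact hf'.mono_set Ioc_subset_Icc_self
  exact h1.mono_set (by rw [uIcc_of_le hab]; exact uIcc_subset_Icc hc hd)

lemma tri_swap {c d : ℝ} (hcd : c ≤ d) {f : ℝ → ℝ → ℝ}
    (hf : Integrable (fun p : ℝ × ℝ => f p.1 p.2)
      ((volume.restrict (Ioc c d)).prod (volume.restrict (Ioc c d)))) :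
    (∫ s in c..d, ∫ θ in c..s, f s θ) = ∫ θ in c..d, ∫ s in θ..d, f s θ := by
  set μ := volume.restrict (Ioc c d) with hμ
  set g : ℝ → ℝ → ℝ := fun s θ => {p : ℝ × ℝ | p.2 ≤ p.1}.indicator (fun p => f p.1 p.2) (s, θ)
    with hg
  have hgint : Integrable (Function.uncurry g) (μ.prod μ) := by
    have : Function.uncurry g = {p : ℝ × ℝ | p.2 ≤ p.1}.indicator (fun p => f p.1 p.2) := by
      ext p; simp [Function.uncurry, hg]
    rw [this]
    exact hf.indicator (measurableSet_le measurable_snd measurable_fst)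
  have key := MeasureTheory.integral_integral_swap hgint
  have hL : (∫ s in c..d, ∫ θ in c..s, f s θ) = ∫ s, (∫ θ, g s θ ∂μ) ∂μ := by
    rw [intervalIntegral.integral_of_le hcd]
    refine setIntegral_congr_fun measurableSet_Ioc (fun s hs => ?_)
    have h1 : (∫ θ, g s θ ∂μ) = ∫ θ in Ioc c d ∩ Iic s, f s θ := by
      rw [hμ]
      have : (fun θ => g s θ) = (Iic s).indicator (fun θ => f s θ) := by
        ext θ; simp [hg, Set.indicator_apply]
      rw [this, setIntegral_indicator measurableSet_Iic]
    rw [h1, Set.Ioc_inter_Iic, min_eq_right hs.2, intervalIntegral.integral_of_le hs.1.le]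
  have hR : (∫ θ in c..d, ∫ s in θ..d, f s θ) = ∫ θ, (∫ s, g s θ ∂μ) ∂μ := by
    rw [intervalIntegral.integral_of_le hcd]
    refine setIntegral_congr_fun measurableSet_Ioc (fun θ hθ => ?_)
    have h1 : (∫ s, g s θ ∂μ) = ∫ s in Ioc c d ∩ Ici θ, f s θ := by
      rw [hμ]
      have : (fun s => g s θ) = (Ici θ).indicator (fun s => f s θ) := by
        ext s; simp [hg, Set.indicator_apply]
      rw [this, setIntegral_indicator measurableSet_Ici]
    have h2 : Ioc c d ∩ Ici θ = Icc θ d := by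
      ext s
      constructor
      · rintro ⟨⟨_, hs2⟩, hs3⟩; exact ⟨hs3, hs2⟩
      · rintro ⟨hs1, hs2⟩; exact ⟨⟨lt_of_lt_of_le hθ.1 hs1, hs2⟩, hs1⟩
    rw [h1, h2, integral_Icc_eq_integral_Ioc, intervalIntegral.integral_of_le hθ.2]
  rw [hL, hR]; exact key

lemma integrable_uncurry_mul {u w : ℝ → ℝ} (hu : Integrable u (μab a b))
    (hw : Integrable w (μab a b)) {g : ℝ × ℝ → ℝ} (hg : Continuous g)
    {c d : ℝ} (hsub : Icc c d ⊆ Icc a b) :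
    Integrable (fun p : ℝ × ℝ => u p.1 * (g p * w p.2))
      ((volume.restrict (Ioc c d)).prod (volume.restrict (Ioc c d))) := by
  have hIoc : Ioc c d ⊆ Icc a b := fun y hy => hsub (Ioc_subset_Icc_self hy)
  have hu0 : IntegrableOn u (Icc a b) volume := hu
  have hw0 : IntegrableOn w (Icc a b) volume := hw
  have hu' : Integrable u (volume.restrict (Ioc c d)) := hu0.mono_set hIoc
  have hw' : Integrable w (volume.restrict (Ioc c d)) := hw0.mono_set hIoc
  have base : Integrable (fun p : ℝ × ℝ => u p.1 * w p.2)
      ((volume.restrict (Ioc c d)).prod (volume.restrict (Ioc c d))) := hu'.mul_prod hw'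
  obtain ⟨C, hC⟩ := (isCompact_Icc.prod isCompact_Icc).exists_bound_of_continuousOn
    (s := Icc a b ×ˢ Icc a b) hg.continuousOn
  have hbd : ∀ᵐ p ∂((volume.restrict (Ioc c d)).prod (volume.restrict (Ioc c d))),
      ‖g p‖ ≤ C := by
    rw [Measure.prod_restrict]
    refine (ae_restrict_mem (measurableSet_Ioc.prod measurableSet_Ioc)).mono fun p hp => ?_
    exact hC p ⟨hIoc hp.1, hIoc hp.2⟩
  have := base.bdd_mul (hg.aestronglyMeasurable) hbd
  refine this.congr ?_
  exact Filter.Eventually.of_forall fun p => by ring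

lemma integral_mulVec_apply {ι κ : Type*} [Fintype κ] (M : Matrix ι κ ℝ) (f : ℝ → κ → ℝ)
    {c d : ℝ} (hf : ∀ j, IntervalIntegrable (fun θ => f θ j) volume c d) (i : ι) :
    ∫ θ in c..d, M.mulVec (f θ) i = M.mulVec (fun j => ∫ θ in c..d, f θ j) i := by
  simp only [Matrix.mulVec, dotProduct]
  rw [intervalIntegral.integral_finset_sum (fun j _ => (hf j).const_mul _)]
  exact Finset.sum_congr rfl fun j _ => intervalIntegral.integral_const_mul _ _

lemma integral_matrix_mulVec {ι κ : Type*} [Fintype κ] (M : ℝ → Matrix ι κ ℝ) (w : κ → ℝ)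
    {c d : ℝ} (hM : ∀ i j, IntervalIntegrable (fun θ => M θ i j) volume c d) (i : ι) :
    ∫ θ in c..d, (M θ).mulVec w i
      = (Matrix.of fun i j => ∫ θ in c..d, M θ i j).mulVec w i := by
  simp only [Matrix.mulVec, dotProduct, Matrix.of_apply]
  rw [intervalIntegral.integral_finset_sum (fun j _ => (hM i j).mul_const _)]
  exact Finset.sum_congr rfl fun j _ => intervalIntegral.integral_mul_const _ _

lemma integrable_mulVec_apply {ι κ : Type*} [Fintype κ] {M : ℝ → Matrix ι κ ℝ}
    {w : ℝ → κ → ℝ} (hM : ∀ i j, MemLp (fun θ => M θ i j) 2 (μab a b))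
    (hw : ∀ j, MemLp (fun θ => w θ j) 2 (μab a b)) (i : ι) :
    Integrable (fun θ => (M θ).mulVec (w θ) i) (μab a b) := by
  simp only [Matrix.mulVec, dotProduct]
  exact integrable_finset_sum _ fun j _ => L2mul (hM i j) (hw j)

lemma memLp2_matmul {ι κ γ : Type*} [Fintype κ] {M : ℝ → Matrix ι κ ℝ}
    {N : ℝ → Matrix κ γ ℝ} (hM : ∀ i j, MemLp (fun θ => M θ i j) 2 (μab a b))
    (hN : ∀ k j, ContinuousOn (fun θ => N θ k j) (Icc a b)) (i : ι) (j : γ) :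
    MemLp (fun θ => (M θ * N θ) i j) 2 (μab a b) := by
  simp only [Matrix.mul_apply]
  refine memLp_finset_sum _ fun k _ => ?_
  simpa [mul_comm] using memLp2_mul_contOn (hM i k) (hN k j)

lemma memLp2_constmul {ι κ γ : Type*} [Fintype κ] (C : Matrix ι κ ℝ)
    {M : ℝ → Matrix κ γ ℝ} (hM : ∀ i j, MemLp (fun θ => M θ i j) 2 (μab a b)) (i : ι) (j : γ) :
    MemLp (fun θ => (C * M θ) i j) 2 (μab a b) := by
  simp only [Matrix.mul_apply]
  exact memLp_finset_sum _ fun k _ => (hM k j).const_mul _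

end Aux

section Aux2
variable {n0 n1 n2 : ℕ}

lemma continuous_Tmat_entry (k j : Ic n1 n2) : Continuous fun η => Tmat n1 n2 η k j := by
  rcases k with k | k | k <;> rcases j with j | j | j <;>
    simp only [Tmat, Matrix.of_apply] <;>
    first
      | exact continuous_const
      | (by_cases h : k = j
         · simp only [h, if_pos rfl]; first | exact continuous_const | exact continuous_id
         · simp only [if_neg h]; exact continuous_const)

lemma continuous_Qmat_entry (k : Ic n1 n2) (j : Ix n0 n1 n2) :
    Continuous fun η => Qmat n0 n1 n2 η k j := by
  rcases k with k | k | k <;> rcases j with j | j | j <;>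
    simp only [Qmat, Matrix.of_apply] <;>
    first
      | exact continuous_const
      | (by_cases h : k = j
         · simp only [h, if_pos rfl]; first | exact continuous_const | exact continuous_id
         · simp only [if_neg h]; exact continuous_const)

lemma Tmat_zero : Tmat n1 n2 0 = 1 := by
  ext k j
  rcases k with k | k | k <;> rcases j with j | j | j <;>
    simp [Tmat, Matrix.one_apply, Sum.inl.injEq, Sum.inr.injEq]

lemma Qmat_affine (η : ℝ) :
    Qmat n0 n1 n2 η = Qmat n0 n1 n2 0 + η • (Qmat n0 n1 n2 1 - Qmat n0 n1 n2 0) := by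
  ext k j
  rcases k with k | k | k <;> rcases j with j | j | j <;>
    simp [Qmat, Matrix.add_apply, Matrix.smul_apply, Matrix.sub_apply]

lemma U1_mulVec (v : Ix n0 n1 n2 → ℝ) :
    (U1 n0 n1 n2).mulVec v = Sum.elim v (fun _ => (0:ℝ)) := by
  funext i
  rcases i with i | i <;> simp [U1, Matrix.mulVec, dotProduct, ite_mul]

lemma U2_mulVec (w : Ic n1 n2 → ℝ) :
    (U2 n0 n1 n2).mulVec w = Sum.elim (fun _ => (0:ℝ)) w := by
  funext i
  rcases i with i | i <;> simp [U2, Matrix.mulVec, dotProduct, ite_mul]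

lemma Tmat_mulVec (η : ℝ) (w : Ic n1 n2 → ℝ) :
    (Tmat n1 n2 η).mulVec w = Sum.elim (fun j => w (.inl j))
      (Sum.elim (fun j => w (.inr (.inl j)) + η * w (.inr (.inr j)))
        (fun j => w (.inr (.inr j)))) := by
  funext i
  rcases i with i | i | i <;>
    simp [Tmat, Matrix.mulVec, dotProduct, Fintype.sum_sum_type, ite_mul]

lemma Qmat_mulVec (η : ℝ) (v : Ix n0 n1 n2 → ℝ) :
    (Qmat n0 n1 n2 η).mulVec v = Sum.elim (fun j => v (.inr (.inl j)))
      (Sum.elim (fun j => η * v (.inr (.inr j))) (fun j => v (.inr (.inr j)))) := by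
  funext i
  rcases i with i | i | i <;>
    simp [Qmat, Matrix.mulVec, dotProduct, Fintype.sum_sum_type, ite_mul]

lemma Tstack_mulVec (a b : ℝ) (w : Ic n1 n2 → ℝ) :
    (Tstack a b n1 n2).mulVec w
      = Sum.elim ((Tmat n1 n2 0).mulVec w) ((Tmat n1 n2 (b - a)).mulVec w) := by
  funext i
  rcases i with i | i <;> rfl

lemma mul_Qstack (B : Matrix (Ic n1 n2) (Ic n1 n2 ⊕ Ic n1 n2) ℝ) (η : ℝ) :
    B * Qstack n0 n1 n2 η = (B.submatrix id Sum.inr) * Qmat n0 n1 n2 η := by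
  ext i j
  simp [Matrix.mul_apply, Qstack, Fintype.sum_sum_type, Matrix.submatrix_apply]

lemma mulVec_sum_elim_right (B : Matrix (Ic n1 n2) (Ic n1 n2 ⊕ Ic n1 n2) ℝ)
    (w : Ic n1 n2 → ℝ) (i : Ic n1 n2) :
    B.mulVec (Sum.elim (fun _ => (0:ℝ)) w) i = (B.submatrix id Sum.inr).mulVec w i := by
  simp [Matrix.mulVec, dotProduct, Fintype.sum_sum_type, Matrix.submatrix_apply]

end Aux2

section Aux3
variable {a b : ℝ} {n0 n1 n2 : ℕ}

lemma intervalIntegrable_congr {f g : ℝ → ℝ} {c d : ℝ} (h : Set.EqOn f g (Set.uIcc c d))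
    (hf : IntervalIntegrable f volume c d) : IntervalIntegrable g volume c d := by
  constructor
  · exact hf.1.congr_fun (h.mono (Ioc_subset_Icc_self.trans Icc_subset_uIcc)) measurableSet_Ioc
  · exact hf.2.congr_fun (h.mono (Ioc_subset_Icc_self.trans Icc_subset_uIcc')) measurableSet_Ioc

lemma comp2 {n : ℕ} {f : ℝ → Fin n → ℝ} (hf : MemLp f 2 (μab a b)) (j : Fin n) :
    MemLp (fun s => f s j) 2 (μab a b) := by
  exact
    (ContinuousLinearMap.proj (R := ℝ) (φ := fun _ : Fin n => ℝ) j).comp_memLp' hf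

lemma contOn_prim (hab : a ≤ b) {g : ℝ → ℝ} (hg : Integrable g (μab a b)) :
    ContinuousOn (fun s => ∫ θ in a..s, g θ) (Icc a b) := by
  have h : IntegrableOn g (uIcc a b) volume := by rw [uIcc_of_le hab]; exact hg
  have := continuousOn_primitive_interval (a := a) (b := b) (f := g) (μ := volume) h
  rwa [uIcc_of_le hab] at this

lemma contOn_prim_left (hab : a ≤ b) {g : ℝ → ℝ} (hg : Integrable g (μab a b)) :
    ContinuousOn (fun θ => ∫ s in θ..b, g s) (Icc a b) := by
  have h : IntegrableOn g (uIcc a b) volume := by rw [uIcc_of_le hab]; exact hg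
  have := continuousOn_primitive_interval_left (a := a) (b := b) (f := g) (μ := volume) h
  rwa [uIcc_of_le hab] at this

lemma memLp2_Dx (x : State a b n0 n1 n2) (j : Ix n0 n1 n2) :
    MemLp (fun θ => Dx x θ j) 2 (μab a b) := by
  rcases j with j | j | j
  · exact comp2 x.memLp_x0 j
  · exact comp2 x.memLp_dx1 j
  · exact comp2 x.memLp_ddx2 j

lemma contOn_xc (hab : a ≤ b) (x : State a b n0 n1 n2) (j : Ic n1 n2) :
    ContinuousOn (fun s => xc x s j) (Icc a b) := by
  rcases j with j | j | j
  · exact (continuousOn_const.add (contOn_prim hab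
      ((comp2 x.memLp_dx1 j).integrable one_le_two))).congr
      (fun s hs => by simpa [xc] using x.ftc_x1 s hs j)
  · exact (continuousOn_const.add (contOn_prim hab
      ((comp2 x.memLp_dx2 j).integrable one_le_two))).congr
      (fun s hs => by simpa [xc] using x.ftc_x2 s hs j)
  · exact (continuousOn_const.add (contOn_prim hab
      ((comp2 x.memLp_ddx2 j).integrable one_le_two))).congr
      (fun s hs => by simpa [xc] using x.ftc_dx2 s hs j)

lemma xc_eq (hab : a ≤ b) (x : State a b n0 n1 n2) {s : ℝ} (hs : s ∈ Icc a b) (i : Ic n1 n2) :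
    xc x s i = (Tmat n1 n2 (s - a)).mulVec (xc x a) i
      + ∫ θ in a..s, (Qmat n0 n1 n2 (s - θ)).mulVec (Dx x θ) i := by
  have hsub : Icc a s ⊆ Icc a b := Icc_subset_Icc le_rfl hs.2
  rcases i with j | j | j
  · simp only [Tmat_mulVec, Qmat_mulVec, xc, Dx, Sum.elim_inl, Sum.elim_inr]
    exact x.ftc_x1 s hs j
  · have hdd : Integrable (fun θ => x.ddx2 θ j) (μab a b) :=
      (comp2 x.memLp_ddx2 j).integrable one_le_two
    have key : x.x2 s j = (x.x2 a j + (s - a) * x.dx2 a j)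
        + ∫ θ in a..s, (s - θ) * x.ddx2 θ j := by
      have h1 := x.ftc_x2 s hs j
      have h2 : ∫ θ in a..s, x.dx2 θ j
          = ∫ θ in a..s, (x.dx2 a j + ∫ β in a..θ, x.ddx2 β j) := by
        refine intervalIntegral.integral_congr fun θ hθ => ?_
        rw [uIcc_of_le hs.1] at hθ
        exact x.ftc_dx2 θ (hsub hθ) j
      have hFi : IntervalIntegrable (fun θ => ∫ β in a..θ, x.ddx2 β j) volume a s := by
        apply ContinuousOn.intervalIntegrable
        rw [uIcc_of_le hs.1]
        exact (contOn_prim hab hdd).mono hsub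
      have h3 : ∫ θ in a..s, (x.dx2 a j + ∫ β in a..θ, x.ddx2 β j)
          = (s - a) * x.dx2 a j + ∫ θ in a..s, ∫ β in a..θ, x.ddx2 β j := by
        rw [intervalIntegral.integral_add intervalIntegrable_const hFi,
          intervalIntegral.integral_const, smul_eq_mul]
      have hprod : Integrable (fun p : ℝ × ℝ => x.ddx2 p.2 j)
          ((volume.restrict (Ioc a s)).prod (volume.restrict (Ioc a s))) := by
        have := integrable_uncurry_mul (u := fun _ => (1:ℝ)) (integrable_const 1) hdd
          (g := fun _ => (1:ℝ)) continuous_const hsub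
        simpa using this
      have h4 := tri_swap hs.1 (f := fun _ θ => x.ddx2 θ j) hprod
      have h5 : (∫ θ in a..s, ∫ σ in θ..s, x.ddx2 θ j)
          = ∫ θ in a..s, (s - θ) * x.ddx2 θ j := by
        refine intervalIntegral.integral_congr fun θ _ => ?_
        rw [intervalIntegral.integral_const, smul_eq_mul]
      rw [h1, h2, h3, h4, h5]; ring
    simp only [Tmat_mulVec, Qmat_mulVec, xc, Dx, Sum.elim_inl, Sum.elim_inr]
    exact key
  · simp only [Tmat_mulVec, Qmat_mulVec, xc, Dx, Sum.elim_inl, Sum.elim_inr]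
    exact x.ftc_dx2 s hs j

lemma continuous_constmul_Qmat {ι : Type*} [Fintype ι] (C : Matrix ι (Ic n1 n2) ℝ)
    (k : ι) (l : Ix n0 n1 n2) : Continuous fun η => (C * Qmat n0 n1 n2 η) k l := by
  simp only [Matrix.mul_apply]
  exact continuous_finset_sum _ fun m _ => (continuous_const.mul (continuous_Qmat_entry m l))

lemma mul_Qmat_entry_affine {ι : Type*} (A : Matrix ι (Ic n1 n2) ℝ)
    (η : ℝ) (i : ι) (j : Ix n0 n1 n2) :
    (A * Qmat n0 n1 n2 η) i j = (A * Qmat n0 n1 n2 0) i j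
      + η * (A * (Qmat n0 n1 n2 1 - Qmat n0 n1 n2 0)) i j := by
  conv_lhs => rw [Qmat_affine η]
  simp [Matrix.mul_add, Matrix.mul_smul, Matrix.add_apply, Matrix.smul_apply, smul_eq_mul]

set_option maxHeartbeats 1000000 in
lemma Econt (hab : a ≤ b) {B_I : ℝ → Matrix (Ic n1 n2) (ID n0 n1 n2) ℝ}
    (hBIe : ∀ i j, MemLp (fun s => B_I s i j) 2 (μab a b)) (i : Ic n1 n2) (j : Ix n0 n1 n2) :
    ContinuousOn
      (fun θ => ∫ s in θ..b, (B_I s * U2 n0 n1 n2 * Qmat n0 n1 n2 (s - θ)) i j)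
      (Icc a b) := by
  have hb : b ∈ Icc a b := right_mem_Icc.mpr hab
  have hU2e : ∀ k l, MemLp (fun s => (B_I s * U2 n0 n1 n2) k l) 2 (μab a b) :=
    fun k l => memLp2_matmul (M := B_I) (N := fun _ => U2 n0 n1 n2) hBIe
      (fun _ _ => continuousOn_const) k l
  set X : ℝ → ℝ := fun s => ((B_I s * U2 n0 n1 n2) * Qmat n0 n1 n2 0) i j with hXdef
  set Y : ℝ → ℝ :=
    fun s => ((B_I s * U2 n0 n1 n2) * (Qmat n0 n1 n2 1 - Qmat n0 n1 n2 0)) i j with hYdef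
  have hX : MemLp X 2 (μab a b) :=
    memLp2_matmul (M := fun s => B_I s * U2 n0 n1 n2) (N := fun _ => Qmat n0 n1 n2 0) hU2e
      (fun _ _ => continuousOn_const) i j
  have hY : MemLp Y 2 (μab a b) :=
    memLp2_matmul (M := fun s => B_I s * U2 n0 n1 n2)
      (N := fun _ => Qmat n0 n1 n2 1 - Qmat n0 n1 n2 0) hU2e
      (fun _ _ => continuousOn_const) i j
  have hsY : MemLp (fun s => s * Y s) 2 (μab a b) := by
    simpa using memLp2_mul_contOn hY (continuous_id.continuousOn)
  have hXi := hX.integrable one_le_two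
  have hYi := hY.integrable one_le_two
  have hsYi := hsY.integrable one_le_two
  refine ContinuousOn.congr
    (f := fun θ => (∫ s in θ..b, X s) + ((∫ s in θ..b, s * Y s) - θ * ∫ s in θ..b, Y s))
    (((contOn_prim_left hab hXi).add
      ((contOn_prim_left hab hsYi).sub (continuousOn_id.mul (contOn_prim_left hab hYi)))))
    ?_
  intro θ hθ
  have e1 : ∀ s, (B_I s * U2 n0 n1 n2 * Qmat n0 n1 n2 (s - θ)) i j
      = X s + (s * Y s - θ * Y s) := by
    intro s
    rw [mul_Qmat_entry_affine]
    simp only [hXdef, hYdef]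
    ring
  calc (∫ s in θ..b, (B_I s * U2 n0 n1 n2 * Qmat n0 n1 n2 (s - θ)) i j)
      = ∫ s in θ..b, (X s + (s * Y s - θ * Y s)) :=
        intervalIntegral.integral_congr fun s _ => e1 s
    _ = (∫ s in θ..b, X s) + ((∫ s in θ..b, s * Y s) - θ * ∫ s in θ..b, Y s) := by
        rw [intervalIntegral.integral_add (intInt hab hXi hθ hb)
          ((intInt hab hsYi hθ hb).sub ((intInt hab hYi hθ hb).const_mul θ)),
          intervalIntegral.integral_sub (intInt hab hsYi hθ hb)
            ((intInt hab hYi hθ hb).const_mul θ),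
          intervalIntegral.integral_const_mul]

end Aux3

set_option maxHeartbeats 1600000 in
/-- If `{(n0,n1,n2), B, B_I}` is admissible, then for every `x ∈ X`
the full derivative vector is recovered from the fundamental state:
`x_D(s) = U1 (Dx)(s) + ∫_a^s R_{D,1}(s,θ)(Dx)(θ)dθ + ∫_s^b R_{D,2}(s,θ)(Dx)(θ)dθ`
for almost every `s ∈ [a,b]`. -/
theorem xD_recovery (a b : ℝ) (hab : a < b) (n0 n1 n2 : ℕ)
    (B : Matrix (Ic n1 n2) (Ic n1 n2 ⊕ Ic n1 n2) ℝ)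
    (B_I : ℝ → Matrix (Ic n1 n2) (ID n0 n1 n2) ℝ)
    (hBI : SqIntMat a b B_I)
    (hadm : Admissible a b n0 n1 n2 B B_I)
    (x : State a b n0 n1 n2) (hx : BCholds a b n0 n1 n2 B B_I x) :
    ∀ᵐ s ∂(μab a b), ∀ i, xD x s i =
      (U1 n0 n1 n2).mulVec (Dx x s) i
      + (∫ θ in a..s, (RD1 a b n0 n1 n2 B B_I s θ).mulVec (Dx x θ) i)
      + (∫ θ in s..b, (RD2 a b n0 n1 n2 B B_I s θ).mulVec (Dx x θ) i) := by
  classical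
  have hab' : a ≤ b := hab.le
  have ham : a ∈ Icc a b := left_mem_Icc.mpr hab'
  have hbm : b ∈ Icc a b := right_mem_Icc.mpr hab'
  set v : ℝ → Ix n0 n1 n2 → ℝ := Dx x with hvdef
  set c0 : Ic n1 n2 → ℝ := xc x a with hc0def
  have hv : ∀ j, MemLp (fun θ => v θ j) 2 (μab a b) := memLp2_Dx x
  have hvI : ∀ j, Integrable (fun θ => v θ j) (μab a b) := fun j => (hv j).integrable one_le_two
  have hBIe : ∀ i j, MemLp (fun s => B_I s i j) 2 (μab a b) := hBI.2
  have hxce : ∀ j, ContinuousOn (fun s => xc x s j) (Icc a b) := contOn_xc hab' x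
  -- matrix entry families
  have hU1e : ∀ k l, MemLp (fun s => (B_I s * U1 n0 n1 n2) k l) 2 (μab a b) :=
    fun k l => memLp2_matmul (M := B_I) (N := fun _ => U1 n0 n1 n2) hBIe
      (fun _ _ => continuousOn_const) k l
  have hU2e : ∀ k l, MemLp (fun s => (B_I s * U2 n0 n1 n2) k l) 2 (μab a b) :=
    fun k l => memLp2_matmul (M := B_I) (N := fun _ => U2 n0 n1 n2) hBIe
      (fun _ _ => continuousOn_const) k l
  have hT2e : ∀ k l, MemLp (fun s => (B_I s * U2 n0 n1 n2 * Tmat n1 n2 (s - a)) k l)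
      2 (μab a b) :=
    fun k l => memLp2_matmul (M := fun s => B_I s * U2 n0 n1 n2)
      (N := fun s => Tmat n1 n2 (s - a)) hU2e
      (fun m l' => (((continuous_Tmat_entry m l').comp
        (continuous_id.sub continuous_const)).continuousOn)) k l
  have hQse : ∀ k l, ContinuousOn (fun θ => (B * Qstack n0 n1 n2 (b - θ)) k l) (Icc a b) := by
    intro k l
    have hcont : Continuous fun θ => (B * Qstack n0 n1 n2 (b - θ)) k l := by
      have h1 : ∀ η, B * Qstack n0 n1 n2 η = B.submatrix id Sum.inr * Qmat n0 n1 n2 η :=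
        fun η => mul_Qstack B η
      simp only [h1]
      exact (continuous_constmul_Qmat (B.submatrix id Sum.inr) k l).comp
        (continuous_const.sub continuous_id)
    exact hcont.continuousOn
  set E : ℝ → Matrix (Ic n1 n2) (Ix n0 n1 n2) ℝ := fun θ =>
    Matrix.of fun i j => ∫ s in θ..b, (B_I s * U2 n0 n1 n2 * Qmat n0 n1 n2 (s - θ)) i j
    with hEdef
  have hEc : ∀ k l, ContinuousOn (fun θ => E θ k l) (Icc a b) := fun k l =>
    Econt hab' hBIe k l
  set M : ℝ → Matrix (Ic n1 n2) (Ix n0 n1 n2) ℝ := fun θ =>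
    B_I θ * U1 n0 n1 n2 - B * Qstack n0 n1 n2 (b - θ) + E θ with hMdef
  have hMe : ∀ k l, MemLp (fun θ => M θ k l) 2 (μab a b) := by
    intro k l
    have hrw : (fun θ => M θ k l) = fun θ =>
        ((B_I θ * U1 n0 n1 n2) k l - (B * Qstack n0 n1 n2 (b - θ)) k l) + E θ k l := by
      funext θ; simp [hMdef, Matrix.sub_apply, Matrix.add_apply]
    rw [hrw]
    exact ((hU1e k l).sub (contOn_memLp2 (hQse k l))).add (contOn_memLp2 (hEc k l))
  have hBQeq : ∀ θ, BQ a b n0 n1 n2 B B_I θ = (BT a b n0 n1 n2 B B_I)⁻¹ * M θ :=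
    fun θ => rfl
  have hBQe : ∀ k l, MemLp (fun θ => BQ a b n0 n1 n2 B B_I θ k l) 2 (μab a b) := by
    intro k l
    simp only [hBQeq]
    exact memLp2_constmul _ hMe k l
  -- integrable vector families
  have hIBQ : ∀ j, Integrable (fun θ => (BQ a b n0 n1 n2 B B_I θ).mulVec (v θ) j) (μab a b) :=
    fun j => integrable_mulVec_apply hBQe hv j
  have hIM : ∀ j, Integrable (fun θ => (M θ).mulVec (v θ) j) (μab a b) :=
    fun j => integrable_mulVec_apply hMe hv j
  have hIQb : ∀ j, Integrable (fun θ => (B * Qstack n0 n1 n2 (b - θ)).mulVec (v θ) j)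
      (μab a b) := fun j => integrable_mulVec_apply
    (M := fun θ => B * Qstack n0 n1 n2 (b - θ))
    (fun k l => contOn_memLp2 (hQse k l)) hv j
  have hIE : ∀ j, Integrable (fun θ => (E θ).mulVec (v θ) j) (μab a b) :=
    fun j => integrable_mulVec_apply (M := E) (fun k l => contOn_memLp2 (hEc k l)) hv j
  have hIU1 : ∀ j, Integrable (fun θ => (B_I θ * U1 n0 n1 n2).mulVec (v θ) j) (μab a b) :=
    fun j => integrable_mulVec_apply (M := fun θ => B_I θ * U1 n0 n1 n2) hU1e hv j
  have hIQm : ∀ (s : ℝ) j, Integrable (fun θ => (Qmat n0 n1 n2 (s - θ)).mulVec (v θ) j)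
      (μab a b) := fun s j => integrable_mulVec_apply (M := fun θ => Qmat n0 n1 n2 (s - θ))
    (fun k l => contOn_memLp2 (((continuous_Qmat_entry k l).comp
      (continuous_const.sub continuous_id)).continuousOn)) hv j
  -- step A, funext form
  have hxcf : ∀ s, s ∈ Icc a b → xc x s = (Tmat n1 n2 (s - a)).mulVec c0
      + fun i => ∫ θ in a..s, (Qmat n0 n1 n2 (s - θ)).mulVec (v θ) i := by
    intro s hs
    funext i
    exact xc_eq hab' x hs i
  -- xD decomposition
  have hxDd : ∀ s, xD x s = (U1 n0 n1 n2).mulVec (v s) + (U2 n0 n1 n2).mulVec (xc x s) := by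
    intro s; funext i
    rcases i with i | i <;> simp [xD, U1_mulVec, U2_mulVec, hvdef]
  have hxDe : ∀ j, MemLp (fun s => xD x s j) 2 (μab a b) := by
    rintro (j | j)
    · exact hv j
    · exact contOn_memLp2 (hxce j)
  -- the boundary identity
  have hmid : ∀ i, (BT a b n0 n1 n2 B B_I).mulVec c0 i
      = ∫ θ in a..b, (M θ).mulVec (v θ) i := by
    intro i
    -- LHS of the boundary condition
    have hLHS : B.mulVec (xb x) i = (B * Tstack a b n1 n2).mulVec c0 i
        + ∫ θ in a..b, (B * Qstack n0 n1 n2 (b - θ)).mulVec (v θ) i := by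
      have hxb : xb x = (Tstack a b n1 n2).mulVec c0 + Sum.elim (fun _ => (0:ℝ))
          (fun j => ∫ θ in a..b, (Qmat n0 n1 n2 (b - θ)).mulVec (v θ) j) := by
        funext k
        rcases k with k | k
        · simp [xb, Tstack_mulVec, Tmat_zero, Matrix.one_mulVec, hc0def]
        · have hxcb := xc_eq hab' x hbm k
          simp only [xb, Pi.add_apply, Tstack_mulVec, Sum.elim_inr]
          exact hxcb
      rw [hxb, Matrix.mulVec_add, Pi.add_apply, Matrix.mulVec_mulVec]
      congr 1
      rw [mulVec_sum_elim_right]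
      rw [← integral_mulVec_apply (B.submatrix id Sum.inr)
        (fun θ => (Qmat n0 n1 n2 (b - θ)).mulVec (v θ))
        (fun j => intInt hab' (hIQm b j) ham hbm) i]
      simp_rw [Matrix.mulVec_mulVec, ← mul_Qstack]
    -- RHS of the boundary condition
    have hRHS : (∫ s in a..b, (B_I s).mulVec (xD x s) i)
        = (∫ θ in a..b, (B_I θ * U1 n0 n1 n2).mulVec (v θ) i)
          + (Matrix.of fun k l =>
              ∫ s in a..b, (B_I s * U2 n0 n1 n2 * Tmat n1 n2 (s - a)) k l).mulVec c0 i
          + ∫ θ in a..b, (E θ).mulVec (v θ) i := by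
      have hpt : ∀ s ∈ Icc a b, (B_I s).mulVec (xD x s) i
          = (B_I s * U1 n0 n1 n2).mulVec (v s) i
            + ((B_I s * U2 n0 n1 n2 * Tmat n1 n2 (s - a)).mulVec c0 i
            + ∫ θ in a..s, (B_I s * U2 n0 n1 n2 * Qmat n0 n1 n2 (s - θ)).mulVec (v θ) i) := by
        intro s hs
        rw [hxDd s, Matrix.mulVec_add, Pi.add_apply, Matrix.mulVec_mulVec]
        congr 1
        rw [Matrix.mulVec_mulVec, hxcf s hs, Matrix.mulVec_add, Pi.add_apply,
          Matrix.mulVec_mulVec]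
        congr 1
        rw [← integral_mulVec_apply (B_I s * U2 n0 n1 n2)
          (fun θ => (Qmat n0 n1 n2 (s - θ)).mulVec (v θ))
          (fun j => intInt hab' (hIQm s j) ham hs) i]
        simp_rw [Matrix.mulVec_mulVec]
      have iT1 : IntervalIntegrable (fun s => (B_I s * U1 n0 n1 n2).mulVec (v s) i)
          volume a b := intInt hab' (hIU1 i) ham hbm
      have iT2 : IntervalIntegrable
          (fun s => (B_I s * U2 n0 n1 n2 * Tmat n1 n2 (s - a)).mulVec c0 i) volume a b :=
        intInt hab' (integrable_mulVec_apply
          (M := fun s => B_I s * U2 n0 n1 n2 * Tmat n1 n2 (s - a)) (w := fun _ => c0)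
          hT2e (fun j => memLp_const (c0 j)) i) ham hbm
      have iTot : IntervalIntegrable (fun s => (B_I s).mulVec (xD x s) i) volume a b :=
        intInt hab' (integrable_mulVec_apply (M := B_I) hBIe hxDe i) ham hbm
      have iSum : IntervalIntegrable (fun s =>
          (B_I s * U1 n0 n1 n2).mulVec (v s) i
            + ((B_I s * U2 n0 n1 n2 * Tmat n1 n2 (s - a)).mulVec c0 i
            + ∫ θ in a..s, (B_I s * U2 n0 n1 n2 * Qmat n0 n1 n2 (s - θ)).mulVec (v θ) i))
          volume a b :=
        intervalIntegrable_congr (fun s hsu => hpt s (by rwa [uIcc_of_le hab'] at hsu)) iTot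
      have iT3 : IntervalIntegrable (fun s =>
          ∫ θ in a..s, (B_I s * U2 n0 n1 n2 * Qmat n0 n1 n2 (s - θ)).mulVec (v θ) i)
          volume a b := by
        have h := (iSum.sub iT1).sub iT2
        have hfe : (fun s =>
            ((B_I s * U1 n0 n1 n2).mulVec (v s) i
              + ((B_I s * U2 n0 n1 n2 * Tmat n1 n2 (s - a)).mulVec c0 i
              + ∫ θ in a..s, (B_I s * U2 n0 n1 n2 * Qmat n0 n1 n2 (s - θ)).mulVec (v θ) i))
              - (B_I s * U1 n0 n1 n2).mulVec (v s) i
              - (B_I s * U2 n0 n1 n2 * Tmat n1 n2 (s - a)).mulVec c0 i)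
            = fun s =>
              ∫ θ in a..s, (B_I s * U2 n0 n1 n2 * Qmat n0 n1 n2 (s - θ)).mulVec (v θ) i := by
          funext s; ring
        rwa [hfe] at h
      have hprod : Integrable (fun p : ℝ × ℝ =>
          (B_I p.1 * U2 n0 n1 n2 * Qmat n0 n1 n2 (p.1 - p.2)).mulVec (v p.2) i)
          ((volume.restrict (Ioc a b)).prod (volume.restrict (Ioc a b))) := by
        have hexp : (fun p : ℝ × ℝ =>
            (B_I p.1 * U2 n0 n1 n2 * Qmat n0 n1 n2 (p.1 - p.2)).mulVec (v p.2) i)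
            = fun p => ∑ l, ∑ k, (B_I p.1 * U2 n0 n1 n2) i k *
                (Qmat n0 n1 n2 (p.1 - p.2) k l * v p.2 l) := by
          funext p
          simp only [Matrix.mulVec, dotProduct, Matrix.mul_apply, Finset.sum_mul, mul_assoc]
        rw [hexp]
        exact integrable_finset_sum _ fun l _ => integrable_finset_sum _ fun k _ =>
          integrable_uncurry_mul ((hU2e i k).integrable one_le_two) (hvI l)
            ((continuous_Qmat_entry k l).comp (continuous_fst.sub continuous_snd))
            (subset_refl _)
      calc (∫ s in a..b, (B_I s).mulVec (xD x s) i)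
          = ∫ s in a..b, ((B_I s * U1 n0 n1 n2).mulVec (v s) i
              + ((B_I s * U2 n0 n1 n2 * Tmat n1 n2 (s - a)).mulVec c0 i
              + ∫ θ in a..s, (B_I s * U2 n0 n1 n2 * Qmat n0 n1 n2 (s - θ)).mulVec (v θ) i)) :=
            intervalIntegral.integral_congr fun s hsu =>
              hpt s (by rwa [uIcc_of_le hab'] at hsu)
        _ = (∫ s in a..b, (B_I s * U1 n0 n1 n2).mulVec (v s) i)
            + ((∫ s in a..b, (B_I s * U2 n0 n1 n2 * Tmat n1 n2 (s - a)).mulVec c0 i)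
            + ∫ s in a..b,
                ∫ θ in a..s, (B_I s * U2 n0 n1 n2 * Qmat n0 n1 n2 (s - θ)).mulVec (v θ) i) := by
            rw [intervalIntegral.integral_add iT1 (iT2.add iT3),
              intervalIntegral.integral_add iT2 iT3]
        _ = (∫ θ in a..b, (B_I θ * U1 n0 n1 n2).mulVec (v θ) i)
            + (Matrix.of fun k l =>
                ∫ s in a..b, (B_I s * U2 n0 n1 n2 * Tmat n1 n2 (s - a)) k l).mulVec c0 i
            + ∫ θ in a..b, (E θ).mulVec (v θ) i := by
            rw [← add_assoc]
            congr 1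
            congr 1
            · exact integral_matrix_mulVec
                (M := fun s => B_I s * U2 n0 n1 n2 * Tmat n1 n2 (s - a)) c0
                (fun k l => intInt hab' ((hT2e k l).integrable one_le_two) ham hbm) i
            · rw [tri_swap hab'
                (f := fun s θ => (B_I s * U2 n0 n1 n2 * Qmat n0 n1 n2 (s - θ)).mulVec (v θ) i)
                hprod]
              refine intervalIntegral.integral_congr fun θ hθu => ?_
              have hθ : θ ∈ Icc a b := by rwa [uIcc_of_le hab'] at hθu
              have := integral_matrix_mulVec
                (M := fun s => B_I s * U2 n0 n1 n2 * Qmat n0 n1 n2 (s - θ)) (v θ)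
                (fun k l => intInt hab'
                  ((memLp2_matmul (M := fun s => B_I s * U2 n0 n1 n2)
                    (N := fun s => Qmat n0 n1 n2 (s - θ)) hU2e
                    (fun m l' => (((continuous_Qmat_entry m l').comp
                      (continuous_id.sub continuous_const)).continuousOn)) k l).integrable
                    one_le_two) hθ hbm) i
              rw [this, hEdef]
    have hBTv : (BT a b n0 n1 n2 B B_I).mulVec c0 i
        = (B * Tstack a b n1 n2).mulVec c0 i
          - (Matrix.of fun k l =>
              ∫ s in a..b, (B_I s * U2 n0 n1 n2 * Tmat n1 n2 (s - a)) k l).mulVec c0 i := by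
      rw [BT, Matrix.sub_mulVec]
      rfl
    have hMv : ∀ θ, (M θ).mulVec (v θ) i
        = (B_I θ * U1 n0 n1 n2).mulVec (v θ) i
          - (B * Qstack n0 n1 n2 (b - θ)).mulVec (v θ) i + (E θ).mulVec (v θ) i := by
      intro θ
      rw [hMdef]
      simp [Matrix.add_mulVec, Matrix.sub_mulVec]
    have hintM : (∫ θ in a..b, (M θ).mulVec (v θ) i)
        = (∫ θ in a..b, (B_I θ * U1 n0 n1 n2).mulVec (v θ) i)
          - (∫ θ in a..b, (B * Qstack n0 n1 n2 (b - θ)).mulVec (v θ) i)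
          + ∫ θ in a..b, (E θ).mulVec (v θ) i := by
      simp_rw [hMv]
      rw [intervalIntegral.integral_add
        ((intInt hab' (hIU1 i) ham hbm).sub (intInt hab' (hIQb i) ham hbm))
        (intInt hab' (hIE i) ham hbm),
        intervalIntegral.integral_sub (intInt hab' (hIU1 i) ham hbm)
          (intInt hab' (hIQb i) ham hbm)]
    have hbc := hx i
    rw [hLHS, hRHS] at hbc
    rw [hBTv, hintM]
    linarith
  -- invert BT
  have hadm' : IsUnit (BT a b n0 n1 n2 B B_I).det := hadm
  have hc0v : ∀ k, c0 k = ∫ θ in a..b, (BQ a b n0 n1 n2 B B_I θ).mulVec (v θ) k := by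
    intro k
    calc c0 k = ((BT a b n0 n1 n2 B B_I)⁻¹ * BT a b n0 n1 n2 B B_I).mulVec c0 k := by
          rw [Matrix.nonsing_inv_mul _ hadm', Matrix.one_mulVec]
      _ = (BT a b n0 n1 n2 B B_I)⁻¹.mulVec ((BT a b n0 n1 n2 B B_I).mulVec c0) k := by
          rw [Matrix.mulVec_mulVec]
      _ = (BT a b n0 n1 n2 B B_I)⁻¹.mulVec
            (fun j => ∫ θ in a..b, (M θ).mulVec (v θ) j) k := by
          rw [show (BT a b n0 n1 n2 B B_I).mulVec c0
            = fun j => ∫ θ in a..b, (M θ).mulVec (v θ) j from funext hmid]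
      _ = ∫ θ in a..b, (BT a b n0 n1 n2 B B_I)⁻¹.mulVec ((M θ).mulVec (v θ)) k :=
          (integral_mulVec_apply _ _ (fun j => intInt hab' (hIM j) ham hbm) k).symm
      _ = ∫ θ in a..b, (BQ a b n0 n1 n2 B B_I θ).mulVec (v θ) k := by
          simp_rw [Matrix.mulVec_mulVec, ← hBQeq]
  -- final pointwise identity on [a,b]
  have hmain : ∀ s ∈ Icc a b, ∀ i, xD x s i =
      (U1 n0 n1 n2).mulVec (v s) i
      + (∫ θ in a..s, (RD1 a b n0 n1 n2 B B_I s θ).mulVec (v θ) i)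
      + ∫ θ in s..b, (RD2 a b n0 n1 n2 B B_I s θ).mulVec (v θ) i := by
    intro s hs i
    have hBQC : ∀ k l, MemLp (fun θ =>
        (U2 n0 n1 n2 * Tmat n1 n2 (s - a) * BQ a b n0 n1 n2 B B_I θ) k l) 2 (μab a b) :=
      fun k l => memLp2_constmul (U2 n0 n1 n2 * Tmat n1 n2 (s - a)) hBQe k l
    have hIRD2 : ∀ j, Integrable (fun θ =>
        (U2 n0 n1 n2 * Tmat n1 n2 (s - a) * BQ a b n0 n1 n2 B B_I θ).mulVec (v θ) j)
        (μab a b) := fun j => integrable_mulVec_apply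
      (M := fun θ => U2 n0 n1 n2 * Tmat n1 n2 (s - a) * BQ a b n0 n1 n2 B B_I θ) hBQC hv j
    have hIU2Q : ∀ j, Integrable (fun θ =>
        (U2 n0 n1 n2 * Qmat n0 n1 n2 (s - θ)).mulVec (v θ) j) (μab a b) :=
      fun j => integrable_mulVec_apply (M := fun θ => U2 n0 n1 n2 * Qmat n0 n1 n2 (s - θ))
        (fun k l => contOn_memLp2 (((continuous_constmul_Qmat (U2 n0 n1 n2) k l).comp
          (continuous_const.sub continuous_id)).continuousOn)) hv j
    have e1 : xD x s i = (U1 n0 n1 n2).mulVec (v s) i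
        + ((U2 n0 n1 n2 * Tmat n1 n2 (s - a)).mulVec c0 i
        + ∫ θ in a..s, (U2 n0 n1 n2 * Qmat n0 n1 n2 (s - θ)).mulVec (v θ) i) := by
      conv_lhs => rw [hxDd s]
      simp only [Pi.add_apply]
      congr 1
      rw [hxcf s hs, Matrix.mulVec_add, Pi.add_apply, Matrix.mulVec_mulVec]
      congr 1
      rw [← integral_mulVec_apply (U2 n0 n1 n2)
        (fun θ => (Qmat n0 n1 n2 (s - θ)).mulVec (v θ))
        (fun j => intInt hab' (hIQm s j) ham hs) i]
      simp_rw [Matrix.mulVec_mulVec]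
    have e2 : (U2 n0 n1 n2 * Tmat n1 n2 (s - a)).mulVec c0 i
        = (∫ θ in a..s,
            (U2 n0 n1 n2 * Tmat n1 n2 (s - a) * BQ a b n0 n1 n2 B B_I θ).mulVec (v θ) i)
          + ∫ θ in s..b,
            (U2 n0 n1 n2 * Tmat n1 n2 (s - a) * BQ a b n0 n1 n2 B B_I θ).mulVec (v θ) i := by
      rw [show c0 = fun j => ∫ θ in a..b, (BQ a b n0 n1 n2 B B_I θ).mulVec (v θ) j
        from funext hc0v]
      rw [← integral_mulVec_apply (U2 n0 n1 n2 * Tmat n1 n2 (s - a))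
        (fun θ => (BQ a b n0 n1 n2 B B_I θ).mulVec (v θ))
        (fun j => intInt hab' (hIBQ j) ham hbm) i]
      simp_rw [Matrix.mulVec_mulVec]
      exact (intervalIntegral.integral_add_adjacent_intervals
        (intInt hab' (hIRD2 i) ham hs) (intInt hab' (hIRD2 i) hs hbm)).symm
    have e3 : (∫ θ in a..s, (RD1 a b n0 n1 n2 B B_I s θ).mulVec (v θ) i)
        = (∫ θ in a..s,
            (U2 n0 n1 n2 * Tmat n1 n2 (s - a) * BQ a b n0 n1 n2 B B_I θ).mulVec (v θ) i)
          + ∫ θ in a..s, (U2 n0 n1 n2 * Qmat n0 n1 n2 (s - θ)).mulVec (v θ) i := by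
      rw [← intervalIntegral.integral_add (intInt hab' (hIRD2 i) ham hs)
        (intInt hab' (hIU2Q i) ham hs)]
      refine intervalIntegral.integral_congr fun θ _ => ?_
      simp only [RD1, RD2, Matrix.add_mulVec, Pi.add_apply]
    have e4 : (∫ θ in s..b, (RD2 a b n0 n1 n2 B B_I s θ).mulVec (v θ) i)
        = ∫ θ in s..b,
            (U2 n0 n1 n2 * Tmat n1 n2 (s - a) * BQ a b n0 n1 n2 B B_I θ).mulVec (v θ) i := rfl
    rw [e1, e2, e3, e4]
    ring
  have hres : μab a b = volume.restrict (Icc a b) := rfl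
  have hae : ∀ᵐ s ∂(μab a b), s ∈ Icc a b := by
    rw [hres]; exact ae_restrict_mem measurableSet_Icc
  exact hae.mono fun s hs => hmain s hs

end PIEpaper
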